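/- Consider the map φ defined for t = (t₁, t₂) ∈ (ℂˣ)² with (1+t₁)(1+t₂)(1+t₂+t₁t₂) ≠ 0 by φ(t₁,t₂) = ( t₁/(1+t₁), t₂(1+t₁)/(1+t₂+t₁t₂), (1+t₂+t₁t₂)/((1+t₁)(1+t₂)), (1+t₂)/(1+t₂+t₁t₂), 1/(1+t₂) ). Then the image of φ equals the set {y ∈ (ℂˣ)⁵ : y₃y₄ + y₁ = 1, y₅ + y₂y₃ = 1, y₄y₅ + y₂y₃y₄ + y₁y₂ = 1}. -/

import Mathlib

/-!
Statement 12 (pentagon example): the image of the explicit parametrization `φ` equals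
the subvariety of the torus `(ℂ*)⁵` cut out by the three pentagon `u`-equations.
-/

theorem statement12 :
    {y : Fin 5 → ℂ |
        ∃ t₁ t₂ : ℂ, t₁ ≠ 0 ∧ t₂ ≠ 0 ∧
          (1 + t₁) * (1 + t₂) * (1 + t₂ + t₁ * t₂) ≠ 0 ∧
          y = ![t₁ / (1 + t₁),
                t₂ * (1 + t₁) / (1 + t₂ + t₁ * t₂),
                (1 + t₂ + t₁ * t₂) / ((1 + t₁) * (1 + t₂)),
                (1 + t₂) / (1 + t₂ + t₁ * t₂),
                1 / (1 + t₂)]} =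
      {y : Fin 5 → ℂ |
        (∀ j, y j ≠ 0) ∧
        y 2 * y 3 + y 0 = 1 ∧
        y 4 + y 1 * y 2 = 1 ∧
        y 3 * y 4 + y 1 * y 2 * y 3 + y 0 * y 1 = 1} := by
  ext y
  simp only [Set.mem_setOf_eq]
  constructor
  · rintro ⟨t₁, t₂, ht₁, ht₂, hprod, rfl⟩
    obtain ⟨h12, h3⟩ := mul_ne_zero_iff.mp hprod
    obtain ⟨h1, h2⟩ := mul_ne_zero_iff.mp h12
    refine ⟨?_, ?_, ?_, ?_⟩
    · intro j
      fin_cases j <;> simp <;> tauto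
    · simp only [Matrix.cons_val_zero, Matrix.cons_val_one, Matrix.head_cons,
        Matrix.cons_val_two, Matrix.tail_cons, Matrix.cons_val_three, Matrix.cons_val_four]
      field_simp
      rw [div_self (show 1 + t₂ + t₂ * t₁ ≠ 0 by rwa [mul_comm t₂])]
    · simp only [Matrix.cons_val_zero, Matrix.cons_val_one, Matrix.head_cons,
        Matrix.cons_val_two, Matrix.tail_cons, Matrix.cons_val_three, Matrix.cons_val_four]
      field_simp
      rw [mul_div_assoc, div_self (show 1 + t₂ + t₂ * t₁ ≠ 0 by rwa [mul_comm t₂])]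
      ring
    · simp only [Matrix.cons_val_zero, Matrix.cons_val_one, Matrix.head_cons,
        Matrix.cons_val_two, Matrix.tail_cons, Matrix.cons_val_three, Matrix.cons_val_four]
      field_simp
      exact div_self (show 1 + t₂ + t₂ * t₁ ≠ 0 by rwa [mul_comm t₂])
  · rintro ⟨hne, h1, h2, h3⟩
    set a := y 0 with ha
    set b := y 1 with hb
    set c := y 2 with hc0
    set d := y 3 with hd
    set e := y 4 with he
    have ha0 : a ≠ 0 := hne 0
    have hb0 : b ≠ 0 := hne 1
    have hc0' : c ≠ 0 := hne 2
    have hd0 : d ≠ 0 := hne 3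
    have he0 : e ≠ 0 := hne 4
    have hcd : c * d = 1 - a := by linear_combination h1
    have ha1 : (1 : ℂ) - a ≠ 0 := hcd ▸ mul_ne_zero hc0' hd0
    have hbc : b * c = 1 - e := by linear_combination h2
    have he1 : (1 : ℂ) - e ≠ 0 := hbc ▸ mul_ne_zero hb0 hc0'
    have hkey : c = 1 - a * e := by
      linear_combination (-c) * h3 + (c * d + a) * h2 + h1
    have hae : (1 : ℂ) - a * e ≠ 0 := hkey ▸ hc0'
    have g1 : b * (1 - a * e) = 1 - e := by linear_combination hbc - b * hkey
    have g3 : d * (1 - a * e) = 1 - a := by linear_combination hcd - d * hkey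
    have h1' : 1 + a / (1 - a) = 1 / (1 - a) := by field_simp; ring
    have h2' : 1 + (1 - e) / e = 1 / e := by field_simp; ring
    have hden : 1 + (1 - e) / e + a / (1 - a) * ((1 - e) / e)
        = (1 - a * e) / ((1 - a) * e) := by field_simp; ring
    have hy : y = ![a, b, c, d, e] := by funext i; fin_cases i <;> rfl
    refine ⟨a / (1 - a), (1 - e) / e, div_ne_zero ha0 ha1, div_ne_zero he1 he0, ?_, ?_⟩
    · rw [hden, h1', h2']
      exact mul_ne_zero (mul_ne_zero (one_div_ne_zero ha1) (one_div_ne_zero he0))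
        (div_ne_zero hae (mul_ne_zero ha1 he0))
    · have key0 : a / (1 - a) / (1 + a / (1 - a)) = a := by
        rw [h1']; field_simp
      have key1 : (1 - e) / e * (1 + a / (1 - a)) / (1 + (1 - e) / e + a / (1 - a) * ((1 - e) / e)) = b := by
        rw [hden, h1']; rw [div_eq_iff (div_ne_zero hae (mul_ne_zero ha1 he0))]
        field_simp
        linear_combination -g1
      have key2 : (1 + (1 - e) / e + a / (1 - a) * ((1 - e) / e)) / ((1 + a / (1 - a)) * (1 + (1 - e) / e)) = c := by
        rw [hden, h1', h2', hkey]; field_simp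
      have key3 : (1 + (1 - e) / e) / (1 + (1 - e) / e + a / (1 - a) * ((1 - e) / e)) = d := by
        rw [hden, h2', div_eq_iff (div_ne_zero hae (mul_ne_zero ha1 he0))]
        field_simp
        linear_combination -g3
      have key4 : 1 / (1 + (1 - e) / e) = e := by rw [h2']; field_simp
      rw [key0, key1, key2, key3, key4]
      exact hy
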